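/- Let δ > 0, let m, n : ℕ → ℝ be strictly increasing sequences of real numbers, and let a, b : ℕ → ℂ. Suppose that for every complex number z with 0 < |z| < δ, both families (a_i · z^{m_i})_{i∈ℕ} and (b_j · z^{n_j})_{j∈ℕ} are absolutely summable and ∑_{i} a_i · z^{m_i} = ∑_{j} b_j · z^{n_j}. If m_{i_0} = −1 for some index i_0, then: (i) if there is an index j_0 with n_{j_0} = −1, then a_{i_0} = b_{j_0}; and (ii) if n_j ≠ −1 for all j, then a_{i_0} = 0. Consequently, the residue Res_z f, defined as the coefficient at exponent −1 of an expansion of f (and as 0 if no exponent equals −1), depends only on the function f and not on the chosen expansion. -/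

import Mathlib

open Filter Topology Set


private lemma aux_rpow_tendsto {e : ℝ} (he : 0 < e) :
    Tendsto (fun r : ℝ => r ^ e) (𝓝[>] (0 : ℝ)) (𝓝 0) := by
  have h := (Real.continuousAt_rpow_const 0 e (Or.inr he.le)).tendsto
  rw [Real.zero_rpow he.ne'] at h
  exact h.mono_left nhdsWithin_le_nhds

private lemma step_lemma {K : Type} (p : K → ℝ) (c : K → ℂ)
    (hfib : ∀ t : ℝ, (p ⁻¹' {t}).Finite)
    (r0 : ℝ) (hr0 : 0 < r0)
    (hsum : ∀ r : ℝ, 0 < r → r ≤ r0 → Summable (fun k => ‖c k‖ * r ^ (p k)))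
    (heq : ∀ r : ℝ, 0 < r → r ≤ r0 → ∑' k, c k * ((r ^ (p k) : ℝ) : ℂ) = 0)
    (t : ℝ) (hlow : ∀ t' : ℝ, t' < t → (∑' k : (p ⁻¹' {t'} : Set K), c k) = 0) :
    (∑' k : (p ⁻¹' {t} : Set K), c k) = 0 := by
  classical
  set A : ℝ → ℂ := fun s => ∑' k : (p ⁻¹' {s} : Set K), c k with hA
  set H : ℝ → ℝ → ℂ := fun r s => if t < s then A s * ((r ^ (s - t) : ℝ) : ℂ) else 0 with hHdef
  have hAnorm : ∀ s : ℝ, ‖A s‖ ≤ ∑' k : (p ⁻¹' {s} : Set K), ‖c (k : K)‖ := by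
    intro s
    haveI := (hfib s).to_subtype
    exact norm_tsum_le_tsum_norm (Summable.of_finite)
  have fiberwise : ∀ r : ℝ, 0 < r → r ≤ r0 →
      HasSum (fun s : ℝ => A s * ((r ^ (s - t) : ℝ) : ℂ)) 0 := by
    intro r hr hrr0
    have hfun : (fun k => c k * ((r ^ (p k - t) : ℝ) : ℂ))
        = fun k => (c k * ((r ^ (p k) : ℝ) : ℂ)) * ((r ^ (-t) : ℝ) : ℂ) := by
      funext k
      rw [sub_eq_add_neg, Real.rpow_add hr, Complex.ofReal_mul]; ring
    have hs' : Summable (fun k => c k * ((r ^ (p k - t) : ℝ) : ℂ)) := by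
      rw [hfun]
      refine Summable.mul_right _ (Summable.of_norm ?_)
      have h2 : (fun k => ‖c k * ((r ^ (p k) : ℝ) : ℂ)‖) = fun k => ‖c k‖ * r ^ (p k) := by
        funext k
        rw [norm_mul, Complex.norm_real, Real.norm_eq_abs,
          abs_of_nonneg (Real.rpow_nonneg hr.le _)]
      rw [h2]; exact hsum r hr hrr0
    have hval : ∑' k, c k * ((r ^ (p k - t) : ℝ) : ℂ) = 0 := by
      rw [hfun, tsum_mul_right, heq r hr hrr0, zero_mul]
    have hfs := hs'.hasSum.tsum_fiberwise p
    rw [hval] at hfs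
    have hinner : ∀ s : ℝ,
        (∑' k : (p ⁻¹' {s} : Set K), (c (k : K) * ((r ^ (p (k : K) - t) : ℝ) : ℂ)))
        = A s * ((r ^ (s - t) : ℝ) : ℂ) := by
      intro s
      rw [hA, ← tsum_mul_right]
      exact tsum_congr fun k => by rw [show p (k : K) = s from k.2]
    simpa only [hinner] using hfs
  have main : ∀ r : ℝ, 0 < r → r ≤ r0 → HasSum (H r) (-(A t)) := by
    intro r hr hrr0
    have hG := fiberwise r hr hrr0
    have hdecomp : (fun s : ℝ => A s * ((r ^ (s - t) : ℝ) : ℂ))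
        = fun s => (if s = t then A t else 0) + H r s := by
      funext s
      rcases lt_trichotomy s t with hst | hst | hst
      · have hz : A s = 0 := hlow s hst
        rw [hz, hHdef]
        simp [if_neg (ne_of_lt hst), if_neg (not_lt.2 hst.le)]
      · subst hst
        rw [sub_self, Real.rpow_zero, Complex.ofReal_one, mul_one, if_pos rfl, hHdef]
        simp
      · rw [if_neg (ne_of_gt hst), hHdef]
        simp [if_pos hst]
    rw [hdecomp] at hG
    have hsingle : HasSum (fun s : ℝ => if s = t then A t else 0) (A t) := hasSum_ite_eq t (A t)
    have hsub := hG.sub hsingle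
    simp only [add_sub_cancel_left, zero_sub] at hsub
    exact hsub
  set B : ℝ → ℝ := fun s => (∑' k : (p ⁻¹' {s} : Set K), ‖c (k : K)‖) * r0 ^ (s - t) with hB
  have hBsum : Summable B := by
    have h1 : Summable (fun k => ‖c k‖ * r0 ^ (p k - t)) := by
      have h2 : (fun k => ‖c k‖ * r0 ^ (p k - t))
          = fun k => (‖c k‖ * r0 ^ (p k)) * r0 ^ (-t) := by
        funext k; rw [sub_eq_add_neg, Real.rpow_add hr0]; ring
      rw [h2]; exact (hsum r0 hr0 le_rfl).mul_right _
    have h2 := h1.hasSum.tsum_fiberwise p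
    have h3 : ∀ s : ℝ,
        (∑' k : (p ⁻¹' {s} : Set K), (‖c (k : K)‖ * r0 ^ (p (k : K) - t))) = B s := by
      intro s
      rw [show B s = (∑' k : (p ⁻¹' {s} : Set K), ‖c (k : K)‖) * r0 ^ (s - t) from rfl,
        ← tsum_mul_right]
      exact tsum_congr fun k => by rw [show p (k : K) = s from k.2]
    exact h2.summable.congr h3
  have hBnonneg : ∀ s, 0 ≤ B s := fun s =>
    mul_nonneg (tsum_nonneg fun k => norm_nonneg _) (Real.rpow_nonneg hr0.le _)
  have hlim : Tendsto (fun r : ℝ => ∑' s : ℝ, H r s) (𝓝[>] (0 : ℝ)) (𝓝 0) := by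
    rw [show (𝓝 (0 : ℂ)) = 𝓝 (∑' _ : ℝ, (0 : ℂ)) by rw [tsum_zero]]
    apply tendsto_tsum_of_dominated_convergence hBsum
    · intro s
      by_cases hst : t < s
      · simp only [hHdef, if_pos hst]
        have h1 := aux_rpow_tendsto (sub_pos.2 hst)
        have h2 : Tendsto (fun r : ℝ => ((r ^ (s - t) : ℝ) : ℂ)) (𝓝[>] (0 : ℝ)) (𝓝 0) := by
          have h3 := (Complex.continuous_ofReal.tendsto 0).comp h1
          simpa [Function.comp_def] using h3
        simpa using h2.const_mul (A s)
      · simp only [hHdef, if_neg hst]; exact tendsto_const_nhds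
    · filter_upwards [Ioo_mem_nhdsGT hr0] with r hr
      intro s
      by_cases hst : t < s
      · simp only [hHdef, if_pos hst, norm_mul, Complex.norm_real, Real.norm_eq_abs,
          abs_of_nonneg (Real.rpow_nonneg hr.1.le _)]
        refine mul_le_mul (hAnorm s)
          (Real.rpow_le_rpow hr.1.le hr.2.le (sub_nonneg.2 hst.le))
          (Real.rpow_nonneg hr.1.le _) (tsum_nonneg fun k => norm_nonneg _)
      · simp only [hHdef, if_neg hst, norm_zero]; exact hBnonneg s
  have heventually : ∀ᶠ r in 𝓝[>] (0 : ℝ), (∑' s : ℝ, H r s) = -(A t) := by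
    filter_upwards [Ioo_mem_nhdsGT hr0] with r hr
    exact (main r hr.1 hr.2.le).tsum_eq
  have hconst : Tendsto (fun _ : ℝ => -(A t)) (𝓝[>] (0 : ℝ)) (𝓝 0) :=
    Tendsto.congr' heventually hlim
  have huniq : (0 : ℂ) = -(A t) := tendsto_nhds_unique hconst tendsto_const_nhds
  exact neg_eq_zero.mp huniq.symm

private def pfun (m n : ℕ → ℝ) : (Σ _ : Bool, ℕ) → ℝ := fun k => cond k.1 (m k.2) (n k.2)
private def cfun (a b : ℕ → ℂ) : (Σ _ : Bool, ℕ) → ℂ := fun k => cond k.1 (a k.2) (-(b k.2))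

private lemma fiber_finite (m n : ℕ → ℝ) (hm : Function.Injective m)
    (hn : Function.Injective n) (t : ℝ) : ((pfun m n) ⁻¹' {t}).Finite := by
  have hsub : (pfun m n) ⁻¹' {t} ⊆
      (Sigma.mk true '' (m ⁻¹' {t})) ∪ (Sigma.mk false '' (n ⁻¹' {t})) := by
    rintro ⟨bb, i⟩ hk
    cases bb
    · exact Or.inr ⟨i, hk, rfl⟩
    · exact Or.inl ⟨i, hk, rfl⟩
  refine Set.Finite.subset (Set.Finite.union ?_ ?_) hsub
  · exact Set.Finite.image _ (Set.Subsingleton.finite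
      (fun i hi j hj => hm ((show m i = t from hi).trans (show m j = t from hj).symm)))
  · exact Set.Finite.image _ (Set.Subsingleton.finite
      (fun i hi j hj => hn ((show n i = t from hi).trans (show n j = t from hj).symm)))


theorem residue_well_defined_14_5 (δ : ℝ) (hδ : 0 < δ)
    (m n : ℕ → ℝ) (hm : StrictMono m) (hn : StrictMono n)
    (a b : ℕ → ℂ)
    (h : ∀ z : ℂ, 0 < ‖z‖ → ‖z‖ < δ →
      Summable (fun i : ℕ => ‖a i * z ^ ((m i : ℝ) : ℂ)‖) ∧
      Summable (fun j : ℕ => ‖b j * z ^ ((n j : ℝ) : ℂ)‖) ∧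
      ∑' i : ℕ, a i * z ^ ((m i : ℝ) : ℂ) = ∑' j : ℕ, b j * z ^ ((n j : ℝ) : ℂ))
    (i₀ : ℕ) (hi₀ : m i₀ = -1) :
    (∀ j₀ : ℕ, n j₀ = -1 → a i₀ = b j₀) ∧ ((∀ j : ℕ, n j ≠ -1) → a i₀ = 0) := by
  classical
  have hδ2 : 0 < δ / 2 := by positivity
  have hreal : ∀ r : ℝ, 0 < r → r ≤ δ / 2 →
      Summable (fun k => ‖cfun a b k‖ * r ^ (pfun m n k)) ∧
      (∑' k, cfun a b k * ((r ^ (pfun m n k) : ℝ) : ℂ)) = 0 := by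
    intro r hr hrδ
    have hrδ' : r < δ := lt_of_le_of_lt hrδ (by linarith)
    have habs : ‖(r : ℂ)‖ = r := by rw [Complex.norm_real, Real.norm_eq_abs, abs_of_pos hr]
    obtain ⟨hsa, hsb, heqz⟩ := h (r : ℂ) (by rw [habs]; exact hr) (by rw [habs]; exact hrδ')
    have hkey : ∀ μ : ℝ, ((r : ℂ)) ^ ((μ : ℝ) : ℂ) = ((r ^ μ : ℝ) : ℂ) := fun μ =>
      (Complex.ofReal_cpow hr.le μ).symm
    have hna : ∀ i, ‖a i * (r : ℂ) ^ ((m i : ℝ) : ℂ)‖ = ‖a i‖ * r ^ (m i) := by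
      intro i
      rw [hkey, norm_mul, Complex.norm_real, Real.norm_eq_abs,
        abs_of_nonneg (Real.rpow_nonneg hr.le _)]
    have hnb : ∀ j, ‖b j * (r : ℂ) ^ ((n j : ℝ) : ℂ)‖ = ‖b j‖ * r ^ (n j) := by
      intro j
      rw [hkey, norm_mul, Complex.norm_real, Real.norm_eq_abs,
        abs_of_nonneg (Real.rpow_nonneg hr.le _)]
    have hsa' : Summable (fun i => ‖a i‖ * r ^ (m i)) := hsa.congr hna
    have hsb' : Summable (fun j => ‖b j‖ * r ^ (n j)) := hsb.congr hnb
    have hnonneg : ∀ k : (Σ _ : Bool, ℕ), 0 ≤ ‖cfun a b k‖ * r ^ (pfun m n k) :=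
      fun k => mul_nonneg (norm_nonneg _) (Real.rpow_nonneg hr.le _)
    have hsumK : Summable (fun k => ‖cfun a b k‖ * r ^ (pfun m n k)) := by
      refine (summable_sigma_of_nonneg hnonneg).mpr ⟨?_, Summable.of_finite⟩
      intro x
      cases x
      · exact hsb'.congr fun j => by
          simp [cfun, pfun]
      · exact hsa'.congr fun i => by
          simp [cfun, pfun]
    refine ⟨hsumK, ?_⟩
    have hsc : Summable (fun k => cfun a b k * ((r ^ (pfun m n k) : ℝ) : ℂ)) := by
      refine Summable.of_norm (hsumK.congr fun k => ?_)
      rw [norm_mul, Complex.norm_real, Real.norm_eq_abs,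
        abs_of_nonneg (Real.rpow_nonneg hr.le _)]
    rw [hsc.tsum_sigma, tsum_fintype, Fintype.sum_bool]
    have e1 : ∑' i : ℕ, cfun a b ⟨true, i⟩ * ((r ^ (pfun m n ⟨true, i⟩) : ℝ) : ℂ)
        = ∑' i : ℕ, a i * (r : ℂ) ^ ((m i : ℝ) : ℂ) :=
      tsum_congr fun i => by rw [show cfun a b ⟨true, i⟩ = a i from rfl,
        show pfun m n ⟨true, i⟩ = m i from rfl, hkey]
    have e2 : ∑' j : ℕ, cfun a b ⟨false, j⟩ * ((r ^ (pfun m n ⟨false, j⟩) : ℝ) : ℂ)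
        = -∑' j : ℕ, b j * (r : ℂ) ^ ((n j : ℝ) : ℂ) := by
      rw [← tsum_neg]
      exact tsum_congr fun j => by
        rw [show cfun a b ⟨false, j⟩ = -(b j) from rfl,
          show pfun m n ⟨false, j⟩ = n j from rfl, hkey]; ring
    rw [e1, e2, heqz]
    ring
  have hfib := fiber_finite m n hm.injective hn.injective
  have key : ∀ t : ℝ, t ≤ -1 →
      (∑' k : ((pfun m n) ⁻¹' {t} : Set (Σ _ : Bool, ℕ)), cfun a b k) = 0 := by
    have main : ∀ q : ℕ∞ × ℕ, ∀ t : ℝ, t ≤ -1 →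
        ({j | n j < t}.encard, {i | m i < t}.ncard) = q →
        (∑' k : ((pfun m n) ⁻¹' {t} : Set (Σ _ : Bool, ℕ)), cfun a b k) = 0 := by
      intro q
      refine (WellFounded.prod_lex (wellFounded_lt (α := ℕ∞)) (wellFounded_lt (α := ℕ))).induction
        (C := fun q => ∀ t : ℝ, t ≤ -1 →
          ({j | n j < t}.encard, {i | m i < t}.ncard) = q →
          (∑' k : ((pfun m n) ⁻¹' {t} : Set (Σ _ : Bool, ℕ)), cfun a b k) = 0) q ?_
      intro x IH t ht hq
      subst hq
      refine step_lemma (pfun m n) (cfun a b) hfib (δ/2) hδ2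
        (fun r hr hrr => (hreal r hr hrr).1) (fun r hr hrr => (hreal r hr hrr).2) t ?_
      intro t' ht'
      have ht'le : t' ≤ -1 := le_of_lt (lt_of_lt_of_le ht' ht)
      rcases em (∃ j, n j = t') with ⟨j1, hj1⟩ | hnj
      · refine IH _ ?_ t' ht'le rfl
        refine Prod.Lex.left _ _ ?_
        have hfin : {j | n j < t'}.Finite := by
          refine (Set.finite_Iio j1).subset fun j hj => ?_
          exact hn.lt_iff_lt.mp (by rw [hj1]; exact hj)
        have hsubset : {j | n j < t'} ⊆ {j | n j < t} := fun j hj => lt_trans hj ht'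
        have hsub : {j | n j < t'} ⊂ {j | n j < t} := by
          refine (Set.ssubset_iff_of_subset hsubset).mpr ⟨j1, ?_, ?_⟩
          · rw [Set.mem_setOf_eq, hj1]; exact ht'
          · rw [Set.mem_setOf_eq, hj1]; exact lt_irrefl t'
        rcases Set.finite_or_infinite {j | n j < t} with hfin2 | hinf
        · exact hfin.encard_lt_encard hsub
        · rw [hinf.encard_eq]
          exact Set.encard_lt_top_iff.mpr hfin
      · rcases em (∃ i, m i = t') with ⟨i1, hi1⟩ | hmi
        · refine IH _ ?_ t' ht'le rfl
          have hle : {j | n j < t'}.encard ≤ {j | n j < t}.encard :=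
            Set.encard_mono (fun j hj => lt_trans hj ht')
          rcases lt_or_eq_of_le hle with hlt | heqq
          · exact Prod.Lex.left _ _ hlt
          · rw [heqq]
            refine Prod.Lex.right _ ?_
            have hfint : {i | m i < t}.Finite := by
              refine (Set.finite_Iio i₀).subset fun i hi => ?_
              exact hm.lt_iff_lt.mp (by rw [hi₀]; exact lt_of_lt_of_le hi ht)
            refine Set.ncard_lt_ncard ?_ hfint
            have hsubset : {i | m i < t'} ⊆ {i | m i < t} := fun i hi => lt_trans hi ht'
            refine (Set.ssubset_iff_of_subset hsubset).mpr ⟨i1, ?_, ?_⟩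
            · rw [Set.mem_setOf_eq, hi1]; exact ht'
            · rw [Set.mem_setOf_eq, hi1]; exact lt_irrefl t'
        · have hempty : ((pfun m n) ⁻¹' {t'} : Set (Σ _ : Bool, ℕ)) = ∅ := by
            ext ⟨bb, i⟩
            simp only [Set.mem_preimage, Set.mem_singleton_iff, Set.mem_empty_iff_false,
              iff_false]
            cases bb
            · exact fun hc => hnj ⟨i, hc⟩
            · exact fun hc => hmi ⟨i, hc⟩
          rw [hempty]
          exact tsum_empty
    exact fun t ht => main _ t ht rfl
  have hkey := key (-1) le_rfl
  constructor
  · intro j₀ hj₀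
    have hset : ((pfun m n) ⁻¹' {(-1 : ℝ)} : Set (Σ _ : Bool, ℕ))
        = (↑({⟨true, i₀⟩, ⟨false, j₀⟩} : Finset (Σ _ : Bool, ℕ)) : Set (Σ _ : Bool, ℕ)) := by
      ext ⟨bb, i⟩
      simp only [Set.mem_preimage, Set.mem_singleton_iff, Finset.coe_insert,
        Finset.coe_singleton, Set.mem_insert_iff, Sigma.mk.inj_iff, heq_eq_eq]
      constructor
      · intro hc
        cases bb
        · exact Or.inr ⟨rfl, hn.injective (hc.trans hj₀.symm)⟩
        · exact Or.inl ⟨rfl, hm.injective (hc.trans hi₀.symm)⟩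
      · rintro (⟨hb, hi⟩ | ⟨hb, hi⟩) <;> subst hb <;> subst hi
        · exact hi₀
        · exact hj₀
    rw [hset, Finset.tsum_subtype'] at hkey
    rw [Finset.sum_pair (by simp : (⟨true, i₀⟩ : Σ _ : Bool, ℕ) ≠ ⟨false, j₀⟩)] at hkey
    have h2 : a i₀ + -(b j₀) = 0 := hkey
    exact eq_of_sub_eq_zero (by rwa [sub_eq_add_neg])
  · intro hno
    have hset : ((pfun m n) ⁻¹' {(-1 : ℝ)} : Set (Σ _ : Bool, ℕ))
        = (↑({⟨true, i₀⟩} : Finset (Σ _ : Bool, ℕ)) : Set (Σ _ : Bool, ℕ)) := by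
      ext ⟨bb, i⟩
      simp only [Set.mem_preimage, Set.mem_singleton_iff, Finset.coe_singleton,
        Sigma.mk.inj_iff, heq_eq_eq]
      constructor
      · intro hc
        cases bb
        · exact absurd hc (hno i)
        · exact ⟨rfl, hm.injective (hc.trans hi₀.symm)⟩
      · rintro ⟨hb, hi⟩; subst hb; subst hi; exact hi₀
    rw [hset, Finset.tsum_subtype', Finset.sum_singleton] at hkey
    exact hkey
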